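/- The cone 𝓐_p = conical hull of { x xᵀ : x ∈ ℝ^p, x_i = 0 for some index i } is a closed subset of the space of symmetric p×p real matrices. -/

import Mathlib

open Matrix

/-- Membership in the cone `𝓐_p`: the conical hull of matrices `x xᵀ` where
`x` has at least one zero coordinate. -/
def memA {p : ℕ} (A : Matrix (Fin p) (Fin p) ℝ) : Prop :=
  ∃ (r : ℕ) (c : Fin r → ℝ) (x : Fin r → Fin p → ℝ),
    (∀ i, 0 ≤ c i) ∧ (∀ i, ∃ j, x i j = 0) ∧
    A = ∑ i, c i • vecMulVec (x i) (x i)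

section Helpers

variable {p : ℕ}

private lemma psd_smul {c : ℝ} (hc : 0 ≤ c) {M : Matrix (Fin p) (Fin p) ℝ}
    (hM : M.PosSemidef) : (c • M).PosSemidef := by
  rw [posSemidef_iff_dotProduct_mulVec] at hM ⊢
  constructor
  · have h := hM.1
    unfold Matrix.IsHermitian at h ⊢
    rw [conjTranspose_smul, h]
    simp
  · intro x
    rw [smul_mulVec]
    have : star x ⬝ᵥ c • (M *ᵥ x) = c * (star x ⬝ᵥ (M *ᵥ x)) := by
      simp [dotProduct, Finset.mul_sum]; ring_nf
      exact Finset.sum_congr rfl fun i _ => by ring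
    rw [this]
    exact mul_nonneg hc (hM.2 x)

private lemma psd_vecMulVec (v : Fin p → ℝ) : (vecMulVec v v).PosSemidef := by
  rw [posSemidef_iff_dotProduct_mulVec]
  constructor
  · ext a b
    simp [vecMulVec_apply, conjTranspose_apply, mul_comm]
  · intro x
    have h : star x ⬝ᵥ (vecMulVec v v) *ᵥ x = (v ⬝ᵥ x) * (v ⬝ᵥ x) := by
      simp only [star_trivial, dotProduct, mulVec, vecMulVec_apply, Finset.mul_sum,
        Finset.sum_mul]
      refine Finset.sum_congr rfl fun a _ => Finset.sum_congr rfl fun b _ => by ring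
    rw [h]
    exact mul_self_nonneg _

private lemma psd_diag_nonneg {M : Matrix (Fin p) (Fin p) ℝ} (hM : M.PosSemidef) (a : Fin p) :
    0 ≤ M a a := by
  have h := hM.dotProduct_mulVec_nonneg (Pi.single a 1)
  simpa [mulVec_single, single_dotProduct] using h

private lemma psd_symm_entry {M : Matrix (Fin p) (Fin p) ℝ} (hM : M.PosSemidef) (a b : Fin p) :
    M b a = M a b := by
  have h := congrFun (congrFun hM.1 a) b
  simpa [conjTranspose_apply] using h

private lemma psd_abs_entry_le {M : Matrix (Fin p) (Fin p) ℝ} (hM : M.PosSemidef) (a b : Fin p) :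
    |M a b| ≤ M a a + M b b := by
  rcases eq_or_ne a b with rfl | hab
  · rw [abs_of_nonneg (psd_diag_nonneg hM a)]
    linarith [psd_diag_nonneg hM a]
  · have h1 := hM.dotProduct_mulVec_nonneg (Pi.single a 1 + Pi.single b 1)
    have h2 := hM.dotProduct_mulVec_nonneg (Pi.single a 1 - Pi.single b 1)
    have hsym := psd_symm_entry hM a b
    rw [star_trivial, mulVec_add, mulVec_single, mulVec_single] at h1
    rw [star_trivial, mulVec_sub, mulVec_single, mulVec_single] at h2
    simp only [add_dotProduct, sub_dotProduct, single_dotProduct, Pi.add_apply, Pi.sub_apply,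
      mul_one, one_mul, Pi.smul_apply, op_smul_eq_mul, col_apply] at h1 h2
    rcases abs_cases (M a b) with ⟨h, _⟩ | ⟨h, _⟩ <;> rw [h] <;> nlinarith [psd_diag_nonneg hM a,
      psd_diag_nonneg hM b]

open scoped MatrixOrder Matrix.Norms.L2Operator in
private lemma psd_exists_sqrt {M : Matrix (Fin p) (Fin p) ℝ} (hM : M.PosSemidef) :
    ∃ B : Matrix (Fin p) (Fin p) ℝ, M = Bᴴ * B := by
  obtain ⟨B, hB⟩ := CStarAlgebra.nonneg_iff_eq_star_mul_self.mp hM.nonneg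
  exact ⟨B, hB⟩

/-- `A ∈ 𝓐_p` iff `A` is a sum of PSD matrices `X j` with `(X j) j j = 0`. -/
private lemma memA_iff_rep (A : Matrix (Fin p) (Fin p) ℝ) :
    memA A ↔ ∃ X : Fin p → Matrix (Fin p) (Fin p) ℝ,
      (∀ j, (X j).PosSemidef) ∧ (∀ j, X j j j = 0) ∧ A = ∑ j, X j := by
  classical
  constructor
  · rintro ⟨r, c, x, hc, hz, rfl⟩
    refine ⟨fun j => ∑ i ∈ Finset.univ.filter (fun i => (hz i).choose = j),
      c i • vecMulVec (x i) (x i), ?_, ?_, ?_⟩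
    · intro j
      refine Finset.sum_induction _ _ (fun a b ha hb => ha.add hb) Matrix.PosSemidef.zero ?_
      intro i _
      exact psd_smul (hc i) (psd_vecMulVec (x i))
    · intro j
      dsimp only
      rw [Matrix.sum_apply]
      refine Finset.sum_eq_zero fun i hi => ?_
      have hij : (hz i).choose = j := (Finset.mem_filter.mp hi).2
      have hx : x i j = 0 := hij ▸ (hz i).choose_spec
      simp [vecMulVec_apply, hx]
    · exact (Finset.sum_fiberwise Finset.univ (fun i => (hz i).choose)
        (fun i => c i • vecMulVec (x i) (x i))).symm
  · rintro ⟨X, hpsd, hzero, rfl⟩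
    choose B hB using fun j => (psd_exists_sqrt (hpsd j))
    have hBcol : ∀ j k, B j k j = 0 := by
      intro j k
      have h0 : ∑ k, B j k j * B j k j = 0 := by
        have hz := hzero j
        rw [hB j] at hz
        simpa [Matrix.mul_apply, conjTranspose_apply] using hz
      have := (Finset.sum_eq_zero_iff_of_nonneg
        (fun i _ => mul_self_nonneg (B j i j))).mp h0 k (Finset.mem_univ k)
      exact mul_self_eq_zero.mp this
    refine ⟨p * p, fun _ => 1,
      fun i => B (finProdFinEquiv.symm i).1 (finProdFinEquiv.symm i).2,
      fun _ => zero_le_one, fun i => ⟨(finProdFinEquiv.symm i).1, hBcol _ _⟩, ?_⟩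
    have key : ∀ j, ∑ k, vecMulVec (B j k) (B j k) = X j := by
      intro j
      rw [hB j]
      ext a b
      simp [Matrix.sum_apply, vecMulVec_apply, Matrix.mul_apply, conjTranspose_apply]
    calc ∑ j, X j = ∑ j, ∑ k, vecMulVec (B j k) (B j k) := by
          simp_rw [key]
      _ = ∑ q : Fin p × Fin p, vecMulVec (B q.1 q.2) (B q.1 q.2) := by
          rw [Fintype.sum_prod_type]
      _ = ∑ i : Fin (p * p), (1 : ℝ) •
            vecMulVec (B (finProdFinEquiv.symm i).1 (finProdFinEquiv.symm i).2)
              (B (finProdFinEquiv.symm i).1 (finProdFinEquiv.symm i).2) := by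
          rw [Fintype.sum_equiv finProdFinEquiv.symm
            (fun i => (1 : ℝ) • vecMulVec (B (finProdFinEquiv.symm i).1 (finProdFinEquiv.symm i).2)
              (B (finProdFinEquiv.symm i).1 (finProdFinEquiv.symm i).2))
            (fun q => vecMulVec (B q.1 q.2) (B q.1 q.2)) (fun i => by simp)]

end Helpers

/-- The cone `𝓐_p` is a closed subset of the space of `p × p` real matrices. -/
theorem isClosed_coneA (p : ℕ) :
    IsClosed {A : Matrix (Fin p) (Fin p) ℝ | memA A} := by
  haveI : SequentialSpace (Matrix (Fin p) (Fin p) ℝ) :=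
    inferInstanceAs (SequentialSpace (Fin p → Fin p → ℝ))
  refine IsSeqClosed.isClosed ?_
  intro A L hmem hconv
  -- entrywise limits
  have hent : ∀ a b, Filter.Tendsto (fun n => A n a b) Filter.atTop (nhds (L a b)) := by
    intro a b
    have hc : Continuous fun M : Matrix (Fin p) (Fin p) ℝ => M a b := by
      exact (continuous_apply b).comp (continuous_apply a)
    exact (hc.tendsto L).comp hconv
  classical
  -- a uniform bound on the entries of the `A n`
  have hbdd : ∀ a b, BddAbove (Set.range fun n => |A n a b|) :=
    fun a b => (Filter.Tendsto.abs (hent a b)).bddAbove_range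
  set g : Fin p → Fin p → ℝ := fun a b => ⨆ n, |A n a b| with hgdef
  have hg1 : ∀ (n : ℕ) a b, |A n a b| ≤ g a b := fun n a b => le_ciSup (hbdd a b) n
  have hg0 : ∀ a b, 0 ≤ g a b := fun a b => (abs_nonneg _).trans (hg1 0 a b)
  set C : ℝ := ∑ a, ∑ b, g a b with hCdef
  have hC : ∀ (n : ℕ) a b, |A n a b| ≤ C := by
    intro n a b
    refine (hg1 n a b).trans ?_
    calc g a b ≤ ∑ b', g a b' :=
          Finset.single_le_sum (fun i _ => hg0 a i) (Finset.mem_univ b)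
      _ ≤ C := Finset.single_le_sum
          (fun i _ => Finset.sum_nonneg fun j _ => hg0 i j) (Finset.mem_univ a)
  -- representations of the `A n`
  choose X hpsd hzero hsum using fun n => (memA_iff_rep (A n)).mp (hmem n)
  -- entrywise bounds on the `X n j`
  have hdiag : ∀ (n : ℕ) j a, X n j a a ≤ C := by
    intro n j a
    have h1 : A n a a = ∑ j', X n j' a a := by rw [hsum n, Matrix.sum_apply]
    have h2 : X n j a a ≤ A n a a := by
      rw [h1]
      exact Finset.single_le_sum (fun i _ => psd_diag_nonneg (hpsd n i) a)
        (Finset.mem_univ j)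
    exact h2.trans ((le_abs_self _).trans (hC n a a))
  have hXbd : ∀ (n : ℕ) j a b, |X n j a b| ≤ 2 * C := by
    intro n j a b
    have := psd_abs_entry_le (hpsd n j) a b
    have ha := hdiag n j a
    have hb := hdiag n j b
    linarith
  -- a compact set containing all the `X n`
  have hIcpt : IsCompact (Set.Icc (-(2 * C)) (2 * C)) := isCompact_Icc
  have hK1 : IsCompact (Set.pi Set.univ fun _ : Fin p => Set.Icc (-(2 * C)) (2 * C)) :=
    isCompact_univ_pi fun _ => hIcpt
  have hK2 : IsCompact ((Set.pi Set.univ fun _ : Fin p =>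
      Set.pi Set.univ fun _ : Fin p => Set.Icc (-(2 * C)) (2 * C)) :
      Set (Matrix (Fin p) (Fin p) ℝ)) :=
    isCompact_univ_pi fun _ => hK1
  have hK : IsCompact (Set.pi Set.univ fun _ : Fin p =>
      ((Set.pi Set.univ fun _ : Fin p =>
        Set.pi Set.univ fun _ : Fin p => Set.Icc (-(2 * C)) (2 * C)) :
        Set (Matrix (Fin p) (Fin p) ℝ))) :=
    isCompact_univ_pi fun _ => hK2
  have hmemK : ∀ n, X n ∈ Set.pi Set.univ fun _ : Fin p =>
      ((Set.pi Set.univ fun _ : Fin p =>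
        Set.pi Set.univ fun _ : Fin p => Set.Icc (-(2 * C)) (2 * C)) :
        Set (Matrix (Fin p) (Fin p) ℝ)) := by
    intro n j _ a _ b _
    exact abs_le.mp (hXbd n j a b)
  obtain ⟨Y, _, φ, hφ, hYlim⟩ := hK.tendsto_subseq hmemK
  -- entrywise limits along the subsequence
  have hYent : ∀ j a b,
      Filter.Tendsto (fun n => X (φ n) j a b) Filter.atTop (nhds (Y j a b)) := by
    intro j a b
    exact tendsto_pi_nhds.mp (tendsto_pi_nhds.mp (tendsto_pi_nhds.mp hYlim j) a) b
  rw [Set.mem_setOf_eq, memA_iff_rep]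
  refine ⟨Y, ?_, ?_, ?_⟩
  · -- each `Y j` is PSD
    intro j
    refine posSemidef_iff_dotProduct_mulVec.mpr ?_
    constructor
    · ext a b
      erw [conjTranspose_apply, star_trivial]
      refine tendsto_nhds_unique ?_ (hYent j a b)
      have heq : (fun n => X (φ n) j b a) = fun n => X (φ n) j a b :=
        funext fun n => psd_symm_entry (hpsd (φ n) j) a b
      rw [← heq]
      exact hYent j b a
    · intro v
      have hq : Filter.Tendsto (fun n => star v ⬝ᵥ (X (φ n) j) *ᵥ v)
          Filter.atTop (nhds (star v ⬝ᵥ (Y j) *ᵥ v)) := by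
        simp only [star_trivial, dotProduct, mulVec]
        exact tendsto_finset_sum _ fun a _ =>
          (tendsto_finset_sum _ fun b _ => (hYent j a b).mul_const (v b)).const_mul (v a)
      exact ge_of_tendsto' hq fun n => (hpsd (φ n) j).dotProduct_mulVec_nonneg v
  · -- zero diagonal entries
    intro j
    have h0 : Filter.Tendsto (fun n => X (φ n) j j j) Filter.atTop (nhds (0 : ℝ)) := by
      simp only [hzero]
      exact tendsto_const_nhds
    exact tendsto_nhds_unique (hYent j j j) h0
  · -- the sum is `L`
    ext a b
    erw [Matrix.sum_apply]
    have heq : (fun n => A (φ n) a b) = fun n => ∑ j, X (φ n) j a b := by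
      funext n
      rw [hsum (φ n), Matrix.sum_apply]
    have h2 : Filter.Tendsto (fun n => A (φ n) a b) Filter.atTop
        (nhds (∑ j, Y j a b)) := by
      rw [heq]
      exact tendsto_finset_sum _ fun j _ => hYent j a b
    exact tendsto_nhds_unique ((hent a b).comp hφ.tendsto_atTop) h2
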